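/- Let p be log-Hölder continuous on ℝⁿ with p⁺ < ∞ and let m > 0. There exists c₁ > 0, depending only on m, the log-Hölder constant of p, and p⁺, such that for every cube (or ball) Q with ℓ(Q) ≤ 1, every x ∈ Q, every a ≥ 0, and every f ∈ L¹(Q) with a + ⨍_Q |f| dy ≤ |Q|^{−m}, one has φ_a(x, ⨍_Q |f| dy) ≤ c₁ ⨍_Q φ_a(y, |f(y)|) dy + c₁ |Q|^m. -/

import Mathlib

open MeasureTheory
open intervalIntegral

set_option maxHeartbeats 1000000

lemma gCore {q a : ℝ} (hq : 1 ≤ q) (ha : 0 ≤ a) {u v : ℝ}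
    (hu : 0 ≤ u) (huv : u ≤ v) :
    (a + u) ^ (q - 2) * u ≤ (a + v) ^ (q - 2) * v := by
  have hv : 0 ≤ v := hu.trans huv
  rcases eq_or_lt_of_le (by linarith : (0:ℝ) ≤ a + u) with h0 | h0
  · have hu0 : u = 0 := by nlinarith
    rw [hu0, mul_zero]
    positivity
  · have hv0 : 0 < a + v := by linarith
    have e1 : (a + u) ^ (q - 2) * u = (a + u) ^ (q - 1) * (u / (a + u)) := by
      rw [show q - 2 = q - 1 - 1 by ring, Real.rpow_sub_one h0.ne']
      field_simp
    have e2 : (a + v) ^ (q - 2) * v = (a + v) ^ (q - 1) * (v / (a + v)) := by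
      rw [show q - 2 = q - 1 - 1 by ring, Real.rpow_sub_one hv0.ne']
      field_simp
    rw [e1, e2]
    apply mul_le_mul
    · exact Real.rpow_le_rpow h0.le (by linarith) (by linarith)
    · rw [div_le_div_iff₀ h0 hv0]; nlinarith
    · positivity
    · positivity

lemma gMono {q a : ℝ} (hq : 1 ≤ q) (ha : 0 ≤ a) :
    MonotoneOn (fun τ : ℝ => q * (a + τ) ^ (q - 2) * τ) (Set.Ici 0) := by
  intro u hu v hv huv
  simp only [Set.mem_Ici] at hu hv
  have := gCore hq ha hu huv
  calc q * (a + u) ^ (q - 2) * u = q * ((a + u) ^ (q - 2) * u) := by ring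
    _ ≤ q * ((a + v) ^ (q - 2) * v) := by
        exact mul_le_mul_of_nonneg_left this (by linarith)
    _ = q * (a + v) ^ (q - 2) * v := by ring

lemma gInt {q a : ℝ} (hq : 1 ≤ q) (ha : 0 ≤ a) {t₁ t₂ : ℝ}
    (h1 : 0 ≤ t₁) (h2 : 0 ≤ t₂) :
    IntervalIntegrable (fun τ : ℝ => q * (a + τ) ^ (q - 2) * τ) volume t₁ t₂ := by
  apply MonotoneOn.intervalIntegrable
  apply (gMono hq ha).mono
  intro u hu
  rcases hu with ⟨h, _⟩
  simp only [Set.mem_Ici]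
  exact le_trans (le_min h1 h2) (by simpa using h)

lemma gNonneg {q a τ : ℝ} (hq : 0 ≤ q) (ha : 0 ≤ a) (hτ : 0 ≤ τ) :
    0 ≤ q * (a + τ) ^ (q - 2) * τ := by positivity

lemma phiNonneg {q a t : ℝ} (hq : 0 ≤ q) (ha : 0 ≤ a) (ht : 0 ≤ t) :
    0 ≤ ∫ τ in (0:ℝ)..t, q * (a + τ) ^ (q - 2) * τ := by
  apply intervalIntegral.integral_nonneg ht
  intro u hu
  exact gNonneg hq ha hu.1

example : True := trivial

lemma phiScale {q a s lam : ℝ} (hq : 1 ≤ q) (ha : 0 ≤ a) (hs : 0 ≤ s)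
    (hL0 : 0 < lam) (hL1 : lam ≤ 1) :
    (∫ τ in (0:ℝ)..lam * s, q * (a + τ) ^ (q - 2) * τ) ≤
      lam * ∫ τ in (0:ℝ)..s, q * (a + τ) ^ (q - 2) * τ := by
  have e : (∫ τ in (0:ℝ)..lam * s, q * (a + τ) ^ (q - 2) * τ)
      = lam * ∫ u in (0:ℝ)..s, q * (a + lam * u) ^ (q - 2) * (lam * u) := by
    rw [show lam * (∫ u in (0:ℝ)..s, q * (a + lam * u) ^ (q - 2) * (lam * u))
        = lam • (∫ u in (0:ℝ)..s, (fun τ => q * (a + τ) ^ (q - 2) * τ) (lam * u)) from rfl,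
      intervalIntegral.smul_integral_comp_mul_left (fun τ => q * (a + τ) ^ (q - 2) * τ) lam]
    norm_num
  rw [e]
  apply mul_le_mul_of_nonneg_left _ hL0.le
  apply intervalIntegral.integral_mono_on hs
  · have := (gInt hq ha (le_refl 0) (by positivity : (0:ℝ) ≤ lam * s)).comp_mul_left (c := lam)
    simpa [hL0.ne'] using this
  · exact gInt hq ha le_rfl hs
  · intro u hu
    exact gMono hq ha (Set.mem_Ici.2 (by nlinarith [hu.1])) (Set.mem_Ici.2 hu.1)
      (by nlinarith [hu.1])

lemma phiDouble {q a t P : ℝ} (hq : 1 ≤ q) (hP : q ≤ P) (ha : 0 ≤ a) (ht : 0 ≤ t) :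
    (∫ τ in (0:ℝ)..2 * t, q * (a + τ) ^ (q - 2) * τ) ≤
      4 * 2 ^ P * ∫ τ in (0:ℝ)..t, q * (a + τ) ^ (q - 2) * τ := by
  have hP0 : (0:ℝ) ≤ P := by linarith
  have h2P : (1:ℝ) ≤ 2 ^ P := Real.one_le_rpow one_le_two hP0
  have e : (∫ τ in (0:ℝ)..2 * t, q * (a + τ) ^ (q - 2) * τ)
      = 2 * ∫ u in (0:ℝ)..t, q * (a + 2 * u) ^ (q - 2) * (2 * u) := by
    rw [show (2:ℝ) * (∫ u in (0:ℝ)..t, q * (a + 2 * u) ^ (q - 2) * (2 * u))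
        = (2:ℝ) • (∫ u in (0:ℝ)..t, (fun τ => q * (a + τ) ^ (q - 2) * τ) (2 * u)) from rfl,
      intervalIntegral.smul_integral_comp_mul_left (fun τ => q * (a + τ) ^ (q - 2) * τ) 2]
    norm_num
  rw [e]
  have key : ∀ u ∈ Set.Icc (0:ℝ) t, q * (a + 2*u) ^ (q - 2) * (2*u)
      ≤ 2 * 2 ^ P * (q * (a + u) ^ (q - 2) * u) := by
    intro u hu
    rcases eq_or_lt_of_le hu.1 with h0 | h0
    · rw [← h0]; norm_num
    · have hau : 0 < a + u := by linarith
      have hbase : (a + 2*u) ^ (q - 2) ≤ 2 ^ P * (a + u) ^ (q - 2) := by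
        rcases le_or_gt 2 q with h2q | h2q
        · calc (a + 2*u) ^ (q - 2) ≤ (2 * (a + u)) ^ (q - 2) :=
              Real.rpow_le_rpow (by linarith) (by linarith) (by linarith)
            _ = 2 ^ (q - 2) * (a + u) ^ (q - 2) := Real.mul_rpow (by norm_num) hau.le
            _ ≤ 2 ^ P * (a + u) ^ (q - 2) := by
              apply mul_le_mul_of_nonneg_right _ (by positivity)
              exact Real.rpow_le_rpow_of_exponent_le one_le_two (by linarith)
        · calc (a + 2*u) ^ (q - 2) ≤ (a + u) ^ (q - 2) :=
              Real.rpow_le_rpow_of_nonpos hau (by linarith) (by linarith)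
            _ ≤ 2 ^ P * (a + u) ^ (q - 2) := by
              apply le_mul_of_one_le_left (by positivity) h2P
      calc q * (a + 2*u) ^ (q - 2) * (2*u) = 2 * (q * u) * ((a + 2*u) ^ (q - 2)) := by ring
        _ ≤ 2 * (q * u) * (2 ^ P * (a + u) ^ (q - 2)) := by
            apply mul_le_mul_of_nonneg_left hbase (by positivity)
        _ = 2 * 2 ^ P * (q * (a + u) ^ (q - 2) * u) := by ring
  calc 2 * ∫ u in (0:ℝ)..t, q * (a + 2*u) ^ (q - 2) * (2*u)
      ≤ 2 * ∫ u in (0:ℝ)..t, 2 * 2 ^ P * (q * (a + u) ^ (q - 2) * u) := by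
        apply mul_le_mul_of_nonneg_left _ (by norm_num)
        apply intervalIntegral.integral_mono_on ht _ _ key
        · have := (gInt hq ha (le_refl 0) (by positivity : (0:ℝ) ≤ 2 * t)).comp_mul_left (c := 2)
          simpa using this
        · exact (gInt hq ha le_rfl ht).const_mul _
    _ = 4 * 2 ^ P * ∫ τ in (0:ℝ)..t, q * (a + τ) ^ (q - 2) * τ := by
        rw [intervalIntegral.integral_const_mul]; ring

example : True := trivial

lemma phiSwap {q1 q2 a s P eps K : ℝ} (hq1 : 1 ≤ q1) (hP1 : q1 ≤ P)
    (hq2 : 1 ≤ q2) (heps : 0 < eps) (heps1 : eps ≤ 1)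
    (ha : 0 ≤ a) (haB : a ≤ eps⁻¹) (hs : 0 ≤ s) (hsB : s ≤ eps⁻¹)
    (hK : ∀ r : ℝ, eps ≤ r → r ≤ 2 * eps⁻¹ → r ^ (q1 - q2) ≤ K) :
    (∫ τ in (0:ℝ)..s, q1 * (a + τ) ^ (q1 - 2) * τ) ≤
      P * K * (∫ τ in (0:ℝ)..s, q2 * (a + τ) ^ (q2 - 2) * τ) + P * eps := by
  have hP0 : (0:ℝ) < P := by linarith
  have hee : eps ≤ 2 * eps⁻¹ := by
    rw [show (2:ℝ) * eps⁻¹ = 2 / eps by rw [div_eq_mul_inv], le_div_iff₀ heps]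
    nlinarith
  have hKpos : 0 < K :=
    lt_of_lt_of_le (Real.rpow_pos_of_pos heps (q1 - q2)) (hK eps le_rfl hee)
  set s₀ : ℝ := min s (max (eps - a) 0) with hs₀def
  have hs₀0 : 0 ≤ s₀ := le_min hs (le_max_right _ _)
  have hs₀s : s₀ ≤ s := min_le_left _ _
  have hsplit : (∫ τ in (0:ℝ)..s, q1 * (a + τ) ^ (q1 - 2) * τ)
      = (∫ τ in (0:ℝ)..s₀, q1 * (a + τ) ^ (q1 - 2) * τ)
        + ∫ τ in s₀..s, q1 * (a + τ) ^ (q1 - 2) * τ :=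
    (intervalIntegral.integral_add_adjacent_intervals
      (gInt hq1 ha le_rfl hs₀0) (gInt hq1 ha hs₀0 hs)).symm
  have partA : (∫ τ in (0:ℝ)..s₀, q1 * (a + τ) ^ (q1 - 2) * τ) ≤ P * eps := by
    rcases le_or_gt eps a with hea | hea
    · have hz : s₀ = 0 := by
        rw [hs₀def, max_eq_right (by linarith), min_eq_right hs]
      rw [hz, intervalIntegral.integral_same]
      positivity
    · have hbnd : ∀ τ ∈ Set.Icc (0:ℝ) s₀, q1 * (a + τ) ^ (q1 - 2) * τ ≤ P := by
        intro τ hτ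
        have hτ0 : (0:ℝ) ≤ τ := hτ.1
        have haτ : a + τ ≤ eps := by
          have hh : s₀ ≤ eps - a :=
            le_trans (min_le_right _ _) (max_le le_rfl (by linarith))
          linarith [hτ.2]
        have hcore : (a + τ) ^ (q1 - 2) * τ ≤ 1 := by
          rcases eq_or_lt_of_le (by linarith : (0:ℝ) ≤ a + τ) with h0 | h0
          · have hτz : τ = 0 := by nlinarith
            simp [hτz]
          · have step1 : (a + τ) ^ (q1 - 2) * τ ≤ (a + τ) ^ (q1 - 2) * (a + τ) := by
              gcongr <;> first | positivity | linarith
            have step2 : (a + τ) ^ (q1 - 2) * (a + τ) = (a + τ) ^ (q1 - 1) := by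
              nth_rewrite 2 [← Real.rpow_one (a + τ)]
              rw [← Real.rpow_add h0]
              congr 1
              ring
            have step3 : (a + τ) ^ (q1 - 1) ≤ 1 :=
              Real.rpow_le_one (by linarith) (by linarith) (by linarith)
            linarith [step1, step2 ▸ step1, step2, step3]
        have : q1 * ((a + τ) ^ (q1 - 2) * τ) ≤ q1 * 1 :=
          mul_le_mul_of_nonneg_left hcore (by linarith)
        calc q1 * (a + τ) ^ (q1 - 2) * τ = q1 * ((a + τ) ^ (q1 - 2) * τ) := by ring
          _ ≤ q1 * 1 := this
          _ ≤ P := by linarith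
      have hs₀eps : s₀ ≤ eps :=
        le_trans (min_le_right _ _) (max_le (by linarith) heps.le)
      calc (∫ τ in (0:ℝ)..s₀, q1 * (a + τ) ^ (q1 - 2) * τ)
          ≤ ∫ _ in (0:ℝ)..s₀, P :=
            intervalIntegral.integral_mono_on hs₀0
              (gInt hq1 ha le_rfl hs₀0) intervalIntegrable_const hbnd
        _ = s₀ * P := by simp
        _ ≤ eps * P := mul_le_mul_of_nonneg_right hs₀eps hP0.le
        _ = P * eps := by ring
  have partB : (∫ τ in s₀..s, q1 * (a + τ) ^ (q1 - 2) * τ)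
      ≤ P * K * ∫ τ in (0:ℝ)..s, q2 * (a + τ) ^ (q2 - 2) * τ := by
    have hφ2 : 0 ≤ ∫ τ in (0:ℝ)..s, q2 * (a + τ) ^ (q2 - 2) * τ :=
      phiNonneg (by linarith) ha hs
    rcases le_or_gt s (max (eps - a) 0) with hcase | hcase
    · have hz : s₀ = s := by rw [hs₀def, min_eq_left hcase]
      rw [hz, intervalIntegral.integral_same]
      positivity
    · have hs₀eq : s₀ = max (eps - a) 0 := by rw [hs₀def, min_eq_right hcase.le]
      have hpt : ∀ τ ∈ Set.Icc s₀ s, q1 * (a + τ) ^ (q1 - 2) * τ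
          ≤ P * K * (q2 * (a + τ) ^ (q2 - 2) * τ) := by
        intro τ hτ
        have hτ0 : 0 ≤ τ := le_trans hs₀0 hτ.1
        have haτ : eps ≤ a + τ := by
          have hh : eps - a ≤ s₀ := hs₀eq ▸ le_max_left _ _
          linarith [hτ.1]
        have haτ' : a + τ ≤ 2 * eps⁻¹ := by linarith [hτ.2]
        have hpos : (0:ℝ) < a + τ := lt_of_lt_of_le heps haτ
        have hsplitpow : (a + τ) ^ (q1 - 2) = (a + τ) ^ (q1 - q2) * (a + τ) ^ (q2 - 2) := by
          rw [← Real.rpow_add hpos]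
          ring_nf
        have hKr : (a + τ) ^ (q1 - q2) ≤ K := hK _ haτ haτ'
        have h1 : q1 * (a + τ) ^ (q1 - 2) * τ
            = (a + τ) ^ (q1 - q2) * (q1 * (a + τ) ^ (q2 - 2) * τ) := by
          rw [hsplitpow]; ring
        have h2 : (a + τ) ^ (q1 - q2) * (q1 * (a + τ) ^ (q2 - 2) * τ)
            ≤ K * (q1 * (a + τ) ^ (q2 - 2) * τ) := by
          gcongr
        have h3 : K * (q1 * (a + τ) ^ (q2 - 2) * τ) ≤ K * (P * (a + τ) ^ (q2 - 2) * τ) := by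
          gcongr
        have h4 : K * (P * (a + τ) ^ (q2 - 2) * τ) ≤ P * K * (q2 * (a + τ) ^ (q2 - 2) * τ) := by
          have hy : (1:ℝ) * ((a + τ) ^ (q2 - 2) * τ) ≤ q2 * ((a + τ) ^ (q2 - 2) * τ) :=
            mul_le_mul_of_nonneg_right hq2 (by positivity)
          have hz := mul_le_mul_of_nonneg_left hy (by positivity : (0:ℝ) ≤ P * K)
          calc K * (P * (a + τ) ^ (q2 - 2) * τ)
              = P * K * (1 * ((a + τ) ^ (q2 - 2) * τ)) := by ring
            _ ≤ P * K * (q2 * ((a + τ) ^ (q2 - 2) * τ)) := hz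
            _ = P * K * (q2 * (a + τ) ^ (q2 - 2) * τ) := by ring
        linarith [h1 ▸ le_trans h2 (le_trans h3 h4)]
      calc (∫ τ in s₀..s, q1 * (a + τ) ^ (q1 - 2) * τ)
          ≤ ∫ τ in s₀..s, P * K * (q2 * (a + τ) ^ (q2 - 2) * τ) :=
            intervalIntegral.integral_mono_on hs₀s
              (gInt hq1 ha hs₀0 hs) ((gInt hq2 ha hs₀0 hs).const_mul _) hpt
        _ = P * K * ∫ τ in s₀..s, q2 * (a + τ) ^ (q2 - 2) * τ := by
            rw [intervalIntegral.integral_const_mul]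
        _ ≤ P * K * ∫ τ in (0:ℝ)..s, q2 * (a + τ) ^ (q2 - 2) * τ := by
            have hsp : (∫ τ in (0:ℝ)..s, q2 * (a + τ) ^ (q2 - 2) * τ)
                = (∫ τ in (0:ℝ)..s₀, q2 * (a + τ) ^ (q2 - 2) * τ)
                  + ∫ τ in s₀..s, q2 * (a + τ) ^ (q2 - 2) * τ :=
              (intervalIntegral.integral_add_adjacent_intervals
                (gInt hq2 ha le_rfl hs₀0) (gInt hq2 ha hs₀0 hs)).symm
            have h0 : 0 ≤ ∫ τ in (0:ℝ)..s₀, q2 * (a + τ) ^ (q2 - 2) * τ :=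
              phiNonneg (by linarith) ha hs₀0
            have hmul : (0:ℝ) ≤ P * K := by positivity
            nlinarith [hsp, h0]
  linarith [hsplit, partA, partB]

example : True := trivial


/-- The shifted Orlicz function `φ_a(x,t)` associated with `φ(x,t) = t^{p(x)}`:
`φ_a(x,t) = ∫₀ᵗ (φ'(x, a+τ)/(a+τ)) τ dτ = ∫₀ᵗ p(x) (a+τ)^{p(x)−2} τ dτ`. -/
noncomputable def phiShift {n : ℕ} (p : (Fin n → ℝ) → ℝ) (a : ℝ)
    (x : Fin n → ℝ) (t : ℝ) : ℝ :=
  ∫ τ in (0:ℝ)..t, p x * (a + τ) ^ (p x - 2) * τ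

/-- shifted key estimate, Thm. 2.5 in [BrDiSc]. Let `p` be
log-Hölder continuous with `p⁺ < ∞` and `m > 0`. Then there is `c₁ > 0`
(depending only on `m`, the log-Hölder constant, and `p⁺`) such that for every
cube `Q` (sup-metric ball of side `ℓ ≤ 1`, volume `ℓ^n`), every `x ∈ Q`, every
`a ≥ 0` and every `f ∈ L¹(Q)` with `a + ⨍_Q |f| ≤ |Q|^{−m}`:
`φ_a(x, ⨍_Q |f|) ≤ c₁ ⨍_Q φ_a(y, |f(y)|) dy + c₁ |Q|^m`. -/
theorem statement18 (n : ℕ) (p : (Fin n → ℝ) → ℝ) (clog pplus : ℝ)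
    (hp1 : ∀ x, 1 ≤ p x) (hpp : ∀ x, p x ≤ pplus)
    (hlog : ∀ x y, x ≠ y →
      |p x - p y| ≤ clog / Real.log (Real.exp 1 + 1 / dist x y))
    (m : ℝ) (hm : 0 < m) :
    ∃ c₁ > 0, ∀ (z : Fin n → ℝ) (ℓ : ℝ), 0 < ℓ → ℓ ≤ 1 →
      ∀ x ∈ Metric.closedBall z (ℓ / 2), ∀ a ≥ (0:ℝ),
      ∀ f : (Fin n → ℝ) → ℝ,
        IntegrableOn f (Metric.closedBall z (ℓ / 2)) volume →
        IntegrableOn (fun y => phiShift p a y |f y|)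
          (Metric.closedBall z (ℓ / 2)) volume →
        a + (⨍ y in Metric.closedBall z (ℓ / 2), |f y| ∂volume) ≤
          ((ℓ ^ n : ℝ)) ^ (-m) →
        phiShift p a x (⨍ y in Metric.closedBall z (ℓ / 2), |f y| ∂volume) ≤
          c₁ * ⨍ y in Metric.closedBall z (ℓ / 2), phiShift p a y |f y| ∂volume
            + c₁ * ((ℓ ^ n : ℝ)) ^ m := by
    classical
  have hP1 : (1:ℝ) ≤ pplus := le_trans (hp1 (fun _ => 0)) (hpp _)
  set K' : ℝ := Real.exp (max clog 0 * (↑n * m + 1)) with hK'def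
  have hK'pos : 0 < K' := Real.exp_pos _
  set D : ℝ := 4 * (2:ℝ) ^ pplus with hDdef
  have hD0 : 0 < D := by positivity
  refine ⟨D * pplus * (K' + 1), by positivity, ?_⟩
  intro z ℓ hℓ0 hℓ1 x hx a ha f hf hφf hab
  set Q := Metric.closedBall z (ℓ / 2) with hQdef
  have hr : (0:ℝ) ≤ ℓ / 2 := by linarith
  have hvol : volume Q = ENNReal.ofReal (ℓ ^ n) := by
    rw [hQdef, Real.volume_pi_closedBall z hr, Fintype.card_fin]
    congr 1
    ring
  set V : ℝ := ℓ ^ n with hVdef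
  have hV0 : 0 < V := pow_pos hℓ0 n
  have hV1 : V ≤ 1 := pow_le_one₀ hℓ0.le hℓ1
  have hVtoReal : (volume Q).toReal = V := by
    rw [hvol, ENNReal.toReal_ofReal hV0.le]
  set eps : ℝ := V ^ m with hepsdef
  have heps0 : 0 < eps := Real.rpow_pos_of_pos hV0 m
  have heps1 : eps ≤ 1 := Real.rpow_le_one hV0.le hV1 hm.le
  have hBeq : V ^ (-m) = eps⁻¹ := by rw [hepsdef, Real.rpow_neg hV0.le]
  set tb : ℝ := ⨍ y in Q, |f y| ∂volume with htbdef
  have hintf_nonneg : 0 ≤ ∫ y in Q, |f y| ∂volume :=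
    integral_nonneg fun y => abs_nonneg _
  have htb0 : 0 ≤ tb := by
    rw [htbdef, setAverage_eq, smul_eq_mul]
    exact mul_nonneg (by positivity) hintf_nonneg
  have hab' : a + tb ≤ eps⁻¹ := by rw [← hBeq]; exact hab
  have haB : a ≤ eps⁻¹ := by linarith
  have htbB : tb ≤ eps⁻¹ := by linarith
  have hφpt : ∀ y : Fin n → ℝ, 0 ≤ phiShift p a y |f y| := by
    intro y
    simp only [phiShift]
    exact phiNonneg (by linarith [hp1 y]) ha (abs_nonneg _)
  set Aφ : ℝ := ⨍ y in Q, phiShift p a y |f y| ∂volume with hAφdef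
  have hAφ0 : 0 ≤ Aφ := by
    rw [hAφdef, setAverage_eq, smul_eq_mul]
    exact mul_nonneg (by positivity) (integral_nonneg fun y => hφpt y)
  -- exponent-swap bound
  have hKbound : ∀ y ∈ Q, ∀ r : ℝ, eps ≤ r → r ≤ 2 * eps⁻¹ → r ^ (p x - p y) ≤ K' := by
    intro y hy r hr1 hr2
    have hr0 : 0 < r := heps0.trans_le hr1
    rw [Real.rpow_def_of_pos hr0, hK'def]
    apply Real.exp_le_exp.2
    by_cases hxy : x = y
    · rw [hxy, sub_self, mul_zero]
      positivity
    · have hd0 : 0 < dist x y := dist_pos.2 hxy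
      have hdl : dist x y ≤ ℓ := by
        have h1 : dist x z ≤ ℓ / 2 := Metric.mem_closedBall.1 hx
        have h2 : dist y z ≤ ℓ / 2 := Metric.mem_closedBall.1 hy
        calc dist x y ≤ dist x z + dist z y := dist_triangle x z y
          _ = dist x z + dist y z := by rw [dist_comm z y]
          _ ≤ ℓ := by linarith
      set Ld : ℝ := Real.log (Real.exp 1 + 1 / dist x y) with hLddef
      have hLd1 : 1 ≤ Ld := by
        have h1 : Real.log (Real.exp 1) ≤ Ld := by
          rw [hLddef]
          apply Real.log_le_log (Real.exp_pos 1)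
          have : 0 < 1 / dist x y := by positivity
          linarith
        rwa [Real.log_exp] at h1
      have hLd0 : 0 < Ld := lt_of_lt_of_le one_pos hLd1
      have hlg0 : 0 ≤ Real.log ℓ⁻¹ := Real.log_nonneg (one_le_inv_iff₀.2 ⟨hℓ0, hℓ1⟩)
      have hlgLd : Real.log ℓ⁻¹ ≤ Ld := by
        rw [hLddef]
        apply Real.log_le_log (by positivity)
        have h1 : 1 / ℓ ≤ 1 / dist x y := one_div_le_one_div_of_le hd0 hdl
        have : ℓ⁻¹ = 1 / ℓ := (one_div ℓ).symm
        linarith [Real.exp_pos 1]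
      have hclog : 0 ≤ clog := by
        by_contra hneg
        push_neg at hneg
        have h := hlog x y hxy
        have : clog / Ld < 0 := div_neg_of_neg_of_pos hneg hLd0
        linarith [abs_nonneg (p x - p y)]
      have hlogeps : Real.log eps = -(m * (↑n * Real.log ℓ⁻¹)) := by
        rw [hepsdef, Real.log_rpow hV0, hVdef, Real.log_pow, Real.log_inv]
        push_cast
        ring
      have hlog2 : (0:ℝ) ≤ Real.log 2 := Real.log_nonneg one_le_two
      have hlog2' : Real.log 2 ≤ 1 := by
        have := Real.log_two_lt_d9
        linarith
      have habs : |Real.log r| ≤ m * (↑n * Real.log ℓ⁻¹) + Real.log 2 := by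
        have hup : Real.log r ≤ m * (↑n * Real.log ℓ⁻¹) + Real.log 2 := by
          have h1 : Real.log r ≤ Real.log (2 * eps⁻¹) := Real.log_le_log hr0 hr2
          rw [Real.log_mul (by norm_num) (by positivity), Real.log_inv, hlogeps] at h1
          linarith
        have hdn : -(Real.log r) ≤ m * (↑n * Real.log ℓ⁻¹) + Real.log 2 := by
          have h1 : Real.log eps ≤ Real.log r := Real.log_le_log heps0 hr1
          rw [hlogeps] at h1
          linarith
        exact abs_le.2 ⟨by linarith, hup⟩
      have hmn0 : (0:ℝ) ≤ m * ↑n := by positivity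
      calc Real.log r * (p x - p y) ≤ |Real.log r * (p x - p y)| := le_abs_self _
        _ = |p x - p y| * |Real.log r| := by rw [abs_mul]; ring
        _ ≤ (clog / Ld) * (m * (↑n * Real.log ℓ⁻¹) + Real.log 2) := by
            apply mul_le_mul (hlog x y hxy) habs (abs_nonneg _)
              (div_nonneg hclog hLd0.le)
        _ ≤ (clog / Ld) * ((↑n * m + 1) * Ld) := by
            apply mul_le_mul_of_nonneg_left _ (div_nonneg hclog hLd0.le)
            nlinarith [hlgLd, hLd1, hmn0, hlg0]
        _ = clog * (↑n * m + 1) := by field_simp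
        _ ≤ max clog 0 * (↑n * m + 1) := by
            apply mul_le_mul_of_nonneg_right (le_max_left _ _) (by positivity)
  have ha0 : (0:ℝ) ≤ a := ha
  clear_value K' D V eps tb Aφ
  set A : ℝ := phiShift p a x (tb / 2) with hAdef
  clear_value A
  have hs2 : (0:ℝ) ≤ tb / 2 := by linarith
  have hdouble : phiShift p a x tb ≤ D * A := by
    have h := phiDouble (hp1 x) (hpp x) ha0 hs2
    have e : (2:ℝ) * (tb / 2) = tb := by ring
    rw [e] at h
    rw [hDdef, hAdef]
    simp only [phiShift]
    exact h
  have hQmeas : MeasurableSet Q := measurableSet_closedBall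
  have hfin : volume Q < ⊤ := by rw [hvol]; exact ENNReal.ofReal_lt_top
  have hintV : ∫ y in Q, |f y| ∂volume = V * tb := by
    have he : tb = V⁻¹ * ∫ y in Q, |f y| ∂volume := by
      rw [htbdef, setAverage_eq, smul_eq_mul, measureReal_def, hVtoReal]
    rw [he, ← mul_assoc, mul_inv_cancel₀ hV0.ne', one_mul]
  have hintφ : ∫ y in Q, phiShift p a y |f y| ∂volume = V * Aφ := by
    have he : Aφ = V⁻¹ * ∫ y in Q, phiShift p a y |f y| ∂volume := by
      rw [hAφdef, setAverage_eq, smul_eq_mul, measureReal_def, hVtoReal]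
    rw [he, ← mul_assoc, mul_inv_cancel₀ hV0.ne', one_mul]
  have hPpos : (0:ℝ) < pplus := lt_of_lt_of_le one_pos hP1
  by_cases hA : A ≤ pplus * eps
  · have h1 : phiShift p a x tb ≤ D * (pplus * eps) :=
      le_trans hdouble (mul_le_mul_of_nonneg_left hA hD0.le)
    have hDPK : (0:ℝ) ≤ D * pplus * K' := by positivity
    have h2 : D * pplus * eps ≤ D * pplus * (K' + 1) * eps := by
      apply mul_le_mul_of_nonneg_right _ heps0.le
      nlinarith [hDPK]
    have h3 : 0 ≤ D * pplus * (K' + 1) * Aφ :=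
      mul_nonneg (by positivity) hAφ0
    nlinarith [h1, h2, h3]
  · push_neg at hA
    have ht0 : 0 < tb := by
      rcases lt_or_eq_of_le htb0 with h | h
      · exact h
      · exfalso
        have hA0 : A = 0 := by
          rw [hAdef, ← h]
          norm_num [phiShift]
        nlinarith [heps0, hPpos]
    set s : ℝ := tb / 2 with hsdef
    clear_value s
    have hs0 : 0 < s := by rw [hsdef]; linarith
    have hsB : s ≤ eps⁻¹ := by rw [hsdef]; linarith
    have hpe : 0 ≤ A - pplus * eps := by linarith
    have hpointwise : ∀ y ∈ Q,
        (A - pplus * eps) / s * |f y| - (A - pplus * eps) ≤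
          pplus * K' * phiShift p a y |f y| := by
      intro y hy
      have hswap : A ≤ pplus * K' * phiShift p a y s + pplus * eps := by
        have h := phiSwap (hp1 x) (hpp x) (hp1 y) heps0 heps1 ha0 haB hs0.le hsB
          (hKbound y hy)
        simpa [hAdef, phiShift] using h
      have hφy0 : 0 ≤ phiShift p a y |f y| := hφpt y
      rcases le_or_gt s |f y| with hcase | hcase
      · have hsy0 : 0 < |f y| := lt_of_lt_of_le hs0 hcase
        have hscale : phiShift p a y s ≤ s / |f y| * phiShift p a y |f y| := by
          have h := phiScale (hp1 y) ha0 (abs_nonneg (f y)) (div_pos hs0 hsy0)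
            ((div_le_one hsy0).2 hcase)
          rw [div_mul_cancel₀ _ hsy0.ne'] at h
          simpa [phiShift] using h
        have h1 : A - pplus * eps ≤ pplus * K' * (s / |f y| * phiShift p a y |f y|) := by
          have h2 := mul_le_mul_of_nonneg_left hscale
            (by positivity : (0:ℝ) ≤ pplus * K')
          linarith
        have h2 := mul_le_mul_of_nonneg_right h1
          (by positivity : (0:ℝ) ≤ |f y| / s)
        have h3 : pplus * K' * (s / |f y| * phiShift p a y |f y|) * (|f y| / s)
            = pplus * K' * phiShift p a y |f y| := by
          field_simp
        have h4 : (A - pplus * eps) / s * |f y| = (A - pplus * eps) * (|f y| / s) := by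
          ring
        rw [h4]
        rw [h3] at h2
        have h5 : 0 ≤ (A - pplus * eps) := hpe
        nlinarith [h2]
      · have h1 : (A - pplus * eps) / s * |f y| ≤ (A - pplus * eps) / s * s :=
          mul_le_mul_of_nonneg_left hcase.le (by positivity)
        have h2 : (A - pplus * eps) / s * s = A - pplus * eps :=
          div_mul_cancel₀ _ hs0.ne'
        have h3 : 0 ≤ pplus * K' * phiShift p a y |f y| := by positivity
        linarith
    have hconst : IntegrableOn (fun _ : Fin n → ℝ => A - pplus * eps) Q volume :=
      integrableOn_const hfin.ne
    have hint1 : IntegrableOn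
        (fun y => (A - pplus * eps) / s * |f y| - (A - pplus * eps)) Q volume :=
      (hf.abs.const_mul _).sub hconst
    have hint2 : IntegrableOn (fun y => pplus * K' * phiShift p a y |f y|) Q volume :=
      hφf.const_mul _
    have hmono := setIntegral_mono_on hint1 hint2 hQmeas hpointwise
    have hleft : ∫ y in Q, ((A - pplus * eps) / s * |f y| - (A - pplus * eps)) ∂volume
        = (A - pplus * eps) / s * (V * tb) - (A - pplus * eps) * V := by
      rw [integral_sub (hf.abs.const_mul _) hconst, MeasureTheory.integral_const_mul, hintV,
        setIntegral_const, measureReal_def, hVtoReal, smul_eq_mul]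
      ring
    have hright : ∫ y in Q, pplus * K' * phiShift p a y |f y| ∂volume
        = pplus * K' * (V * Aφ) := by
      rw [MeasureTheory.integral_const_mul, hintφ]
    rw [hleft, hright] at hmono
    have htbs : (A - pplus * eps) / s * (V * tb) = 2 * (A - pplus * eps) * V := by
      rw [hsdef]
      field_simp
    rw [htbs] at hmono
    have hAle : A ≤ pplus * K' * Aφ + pplus * eps := by
      nlinarith [hV0, hmono]
    have hfinal := le_trans hdouble (mul_le_mul_of_nonneg_left hAle hD0.le)
    have e1 : 0 ≤ D * pplus * Aφ :=
      mul_nonneg (by positivity) hAφ0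
    have e2 : 0 ≤ D * pplus * K' * eps := by positivity
    nlinarith [hfinal, e1, e2]
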